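/- Define L_G(θ₁, θ₂, φ) = (θ₂ − φ·θ₁ − 1)² − (1/2)·(θ₁ + φ·θ₂ − 1)². Then (θ₁, θ₂) = (1, 1) is a critical point of the function f(θ₁, θ₂) := L_G(θ₁, θ₂, 0) (its gradient vanishes at (1,1)), but (1, 1) is NOT a local minimum of f: for every t ≠ 0, f(1 + t, 1) = −t²/2 < 0 = f(1, 1). Consequently (1, 1, 0) is not a differential Nash equilibrium of the game of Example 1 even though it is a locally stable stationary point. -/

import Mathlib

/-- The generator loss of Example 1. -/
noncomputable def LG (θ₁ θ₂ φ : ℝ) : ℝ :=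
  (θ₂ - φ * θ₁ - 1) ^ 2 - (1 / 2) * (θ₁ + φ * θ₂ - 1) ^ 2

/-- `(1, 1)` is a critical point of `f(θ₁, θ₂) := L_G(θ₁, θ₂, 0)` but not a local
minimum: `f(1 + t, 1) = −t²/2 < 0 = f(1, 1)` for every `t ≠ 0`. Consequently
`(1, 1, 0)` is not a differential Nash equilibrium of the game of Example 1. -/
theorem example1_not_DNE :
    fderiv ℝ (fun p : ℝ × ℝ => LG p.1 p.2 0) (1, 1) = 0 ∧
    LG 1 1 0 = 0 ∧
    (∀ t : ℝ, t ≠ 0 → LG (1 + t) 1 0 = -t ^ 2 / 2 ∧ LG (1 + t) 1 0 < LG 1 1 0) ∧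
    ¬ IsLocalMin (fun p : ℝ × ℝ => LG p.1 p.2 0) (1, 1) := by
  have hfun : (fun p : ℝ × ℝ => LG p.1 p.2 0) =
      fun p : ℝ × ℝ => (p.2 - 1) * (p.2 - 1) - (1 / 2) * ((p.1 - 1) * (p.1 - 1)) := by
    funext p; simp [LG]; ring
  have h1 : HasFDerivAt (fun p : ℝ × ℝ => p.2 - 1)
      (ContinuousLinearMap.snd ℝ ℝ ℝ) ((1 : ℝ), (1 : ℝ)) :=
    (hasFDerivAt_snd).sub_const 1
  have h2 : HasFDerivAt (fun p : ℝ × ℝ => p.1 - 1)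
      (ContinuousLinearMap.fst ℝ ℝ ℝ) ((1 : ℝ), (1 : ℝ)) :=
    (hasFDerivAt_fst).sub_const 1
  have hD : HasFDerivAt (fun p : ℝ × ℝ => LG p.1 p.2 0)
      (0 : ℝ × ℝ →L[ℝ] ℝ) ((1 : ℝ), (1 : ℝ)) := by
    rw [hfun]
    have := (h1.mul h1).sub ((h2.mul h2).const_mul (1 / 2 : ℝ))
    refine this.congr_fderiv ?_
    ext <;> simp
  have hLG0 : LG 1 1 0 = 0 := by norm_num [LG]
  have hval : ∀ t : ℝ, LG (1 + t) 1 0 = -t ^ 2 / 2 := by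
    intro t; simp [LG]; ring
  refine ⟨hD.fderiv.trans rfl, hLG0, ?_, ?_⟩
  · intro t ht
    have h := hval t
    refine ⟨h, ?_⟩
    rw [h, hLG0]
    have : (0 : ℝ) < t ^ 2 := by positivity
    linarith
  · intro hmin
    rw [IsLocalMin, IsMinFilter, Metric.eventually_nhds_iff] at hmin
    obtain ⟨ε, hε, hball⟩ := hmin
    have hd : dist ((1 + ε / 2, 1) : ℝ × ℝ) (1, 1) < ε := by
      rw [Prod.dist_eq]
      simp [Real.dist_eq, abs_of_nonneg hε.le]
      linarith
    have := hball hd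
    simp only [hLG0, hval (ε / 2)] at this
    nlinarith
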